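/- Let A and B be positive definite n×n complex matrices. With S(A|B) = A^(1/2) · log(A^(-1/2) B A^(-1/2)) · A^(1/2), we have S(A|B) = -B^(1/2) · [ (B^(-1/2) A B^(-1/2)) · log(B^(-1/2) A B^(-1/2)) ] · B^(1/2). -/

import Mathlib

open Matrix
open scoped ComplexOrder

attribute [local instance] Matrix.frobeniusNormedAddCommGroup Matrix.frobeniusNormedSpace

/-- Matrix logarithm via the continuous functional calculus (spectral theorem). -/
noncomputable def mlog {n : Type*} [Fintype n] [DecidableEq n] (A : Matrix n n ℂ) :
    Matrix n n ℂ := cfc Real.log A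

/-- Real power of a matrix via the continuous functional calculus (spectral theorem). -/
noncomputable def mpow {n : Type*} [Fintype n] [DecidableEq n] (A : Matrix n n ℂ) (r : ℝ) :
    Matrix n n ℂ := cfc (fun x : ℝ => x ^ r) A


open Polynomial

section Aux

variable {n : Type*} [Fintype n] [DecidableEq n]

lemma contOn (f : ℝ → ℝ) (M : Matrix n n ℂ) : ContinuousOn f (spectrum ℝ M) :=
  Matrix.finite_real_spectrum.continuousOn f

lemma spec_pos {A : Matrix n n ℂ} (hA : A.PosDef) : ∀ x ∈ spectrum ℝ A, 0 < x := by
  rw [hA.isHermitian.spectrum_real_eq_range_eigenvalues]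
  rintro x ⟨i, rfl⟩
  exact hA.eigenvalues_pos i

lemma aeval_semiconj (X Y : Matrix n n ℂ) (q : ℝ[X]) :
    X * (aeval (Y * X) q) = (aeval (X * Y) q) * X := by
  have h : SemiconjBy X (Y * X) (X * Y) := by simp [SemiconjBy, mul_assoc]
  rw [aeval_eq_sum_range (Y * X), aeval_eq_sum_range (X * Y), Finset.mul_sum, Finset.sum_mul]
  exact Finset.sum_congr rfl fun i _ => by
    rw [mul_smul_comm, smul_mul_assoc, (h.pow_right i).eq]

lemma mpow_sa {A : Matrix n n ℂ} (r : ℝ) : IsSelfAdjoint (mpow A r) :=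
  cfc_predicate _ A

lemma mpow_mul_mpow {A : Matrix n n ℂ} (hA : A.PosDef) (r s : ℝ) :
    mpow A r * mpow A s = mpow A (r + s) := by
  unfold mpow
  rw [← cfc_mul _ _ A (contOn _ _) (contOn _ _)]
  exact cfc_congr fun x hx => (Real.rpow_add (spec_pos hA x hx) r s).symm

lemma mpow_one_eq {A : Matrix n n ℂ} (hA : A.PosDef) : mpow A 1 = A := by
  unfold mpow
  have : cfc (fun x : ℝ => x ^ (1:ℝ)) A = cfc (id : ℝ → ℝ) A :=
    cfc_congr fun x _ => Real.rpow_one x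
  rw [this]; exact cfc_id ℝ A hA.1

lemma mpow_zero_eq {A : Matrix n n ℂ} (hA : A.PosDef) : mpow A 0 = 1 := by
  unfold mpow
  have : cfc (fun x : ℝ => x ^ (0:ℝ)) A = cfc (fun _ : ℝ => (1:ℝ)) A :=
    cfc_congr fun x _ => Real.rpow_zero x
  rw [this]; exact cfc_const_one ℝ A hA.1

lemma sa_mul_star (X : Matrix n n ℂ) : _root_.IsSelfAdjoint (X * star X) := by
  simp [_root_.IsSelfAdjoint, StarMul.star_mul]

lemma sa_star_mul (X : Matrix n n ℂ) : _root_.IsSelfAdjoint (star X * X) := by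
  simp [_root_.IsSelfAdjoint, StarMul.star_mul, mul_assoc]

lemma cfc_mul_star_comm (f : ℝ → ℝ) (X : Matrix n n ℂ) :
    cfc f (X * star X) * X = X * cfc f (star X * X) := by
  classical
  set s : Finset ℝ :=
    (Matrix.finite_real_spectrum (A := X * star X)).toFinset ∪
      (Matrix.finite_real_spectrum (A := star X * X)).toFinset with hs
  set q : ℝ[X] := Lagrange.interpolate s id f with hqdef
  have hq : ∀ x ∈ s, q.eval x = f x := fun x hx => by
    simpa [hqdef] using Lagrange.eval_interpolate_at_node f (Set.injOn_id _) hx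
  have h1 : cfc f (X * star X) = aeval (X * star X) q := by
    rw [← cfc_polynomial q (X * star X) (sa_mul_star X)]
    exact cfc_congr fun x hx => (hq x (by simp [hs, hx])).symm
  have h2 : cfc f (star X * X) = aeval (star X * X) q := by
    rw [← cfc_polynomial q (star X * X) (sa_star_mul X)]
    exact cfc_congr fun x hx => (hq x (by simp [hs, hx])).symm
  rw [h1, h2, aeval_semiconj]

lemma mlog_inv {M E : Matrix n n ℂ} (hM : IsSelfAdjoint M) (hME : M * E = 1)
    (hEM : E * M = 1) (h0 : ∀ x ∈ spectrum ℝ M, x ≠ 0) : mlog E = -(mlog M) := by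
  have hEeq : E = cfc (fun x : ℝ => x⁻¹) M := by
    have h1 : cfc (fun x : ℝ => x⁻¹) M * M = 1 := by
      nth_rewrite 2 [← cfc_id ℝ M hM]
      rw [← cfc_mul _ _ M (contOn _ _) (contOn _ _)]
      rw [show (1 : Matrix n n ℂ) = cfc (fun _ : ℝ => (1:ℝ)) M from (cfc_const_one ℝ M hM).symm]
      exact cfc_congr fun x hx => inv_mul_cancel₀ (h0 x hx)
    calc E = 1 * E := (one_mul E).symm
      _ = (cfc (fun x : ℝ => x⁻¹) M * M) * E := by rw [h1]
      _ = cfc (fun x : ℝ => x⁻¹) M * (M * E) := by rw [mul_assoc]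
      _ = cfc (fun x : ℝ => x⁻¹) M := by rw [hME, mul_one]
  rw [hEeq]
  unfold mlog
  rw [← cfc_comp Real.log (fun x : ℝ => x⁻¹) M hM
    (((Matrix.finite_real_spectrum (A := M)).image _).continuousOn _) (contOn _ _)]
  have : cfc (Real.log ∘ fun x : ℝ => x⁻¹) M = cfc (fun x : ℝ => -Real.log x) M :=
    cfc_congr fun x _ => Real.log_inv x
  rw [this, cfc_neg]

end Aux

set_option maxHeartbeats 1000000 in
theorem stmt_14 {n : Type*} [Fintype n] [DecidableEq n]
    (A B : Matrix n n ℂ) (hA : A.PosDef) (hB : B.PosDef) :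
    mpow A (1/2) * mlog (mpow A (-(1/2)) * B * mpow A (-(1/2))) * mpow A (1/2) =
      -(mpow B (1/2) *
        ((mpow B (-(1/2)) * A * mpow B (-(1/2))) *
          mlog (mpow B (-(1/2)) * A * mpow B (-(1/2)))) * mpow B (1/2)) := by
  set P := mpow A (1/2) with hPdef
  set Pi := mpow A (-(1/2)) with hPidef
  set Q := mpow B (1/2) with hQdef
  set Qi := mpow B (-(1/2)) with hQidef
  have hP : _root_.IsSelfAdjoint P := mpow_sa _
  have hPi : _root_.IsSelfAdjoint Pi := mpow_sa _
  have hQ : _root_.IsSelfAdjoint Q := mpow_sa _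
  have hQi : _root_.IsSelfAdjoint Qi := mpow_sa _
  have hPPi : P * Pi = 1 := by
    rw [hPdef, hPidef, mpow_mul_mpow hA, show (1/2 + -(1/2) : ℝ) = 0 by norm_num,
      mpow_zero_eq hA]
  have hPiP : Pi * P = 1 := by
    rw [hPdef, hPidef, mpow_mul_mpow hA, show (-(1/2) + 1/2 : ℝ) = 0 by norm_num,
      mpow_zero_eq hA]
  have hPP : P * P = A := by
    rw [hPdef, mpow_mul_mpow hA, show (1/2 + 1/2 : ℝ) = 1 by norm_num, mpow_one_eq hA]
  have hQQi : Q * Qi = 1 := by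
    rw [hQdef, hQidef, mpow_mul_mpow hB, show (1/2 + -(1/2) : ℝ) = 0 by norm_num,
      mpow_zero_eq hB]
  have hQiQ : Qi * Q = 1 := by
    rw [hQdef, hQidef, mpow_mul_mpow hB, show (-(1/2) + 1/2 : ℝ) = 0 by norm_num,
      mpow_zero_eq hB]
  have hBQiQi : B * (Qi * Qi) = 1 := by
    have h : mpow B 1 * mpow B (-1) = 1 := by
      rw [mpow_mul_mpow hB, show (1 + -1 : ℝ) = 0 by norm_num, mpow_zero_eq hB]
    rw [mpow_one_eq hB] at h
    rw [hQidef, mpow_mul_mpow hB, show (-(1/2) + -(1/2) : ℝ) = -1 by norm_num]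
    exact h
  have hQiQiB : (Qi * Qi) * B = 1 := by
    have h : mpow B (-1) * mpow B 1 = 1 := by
      rw [mpow_mul_mpow hB, show (-1 + 1 : ℝ) = 0 by norm_num, mpow_zero_eq hB]
    rw [mpow_one_eq hB] at h
    rw [hQidef, mpow_mul_mpow hB, show (-(1/2) + -(1/2) : ℝ) = -1 by norm_num]
    exact h
  set C := Qi * A * Qi with hCdef
  set E := P * (Qi * Qi) * P with hEdef
  set M := Pi * B * Pi with hMdef
  -- the key commutation identity
  have hstar : star (P * Qi) = Qi * P := by
    rw [StarMul.star_mul, hQi.star_eq, hP.star_eq]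
  have key : mlog E * (P * Qi) = (P * Qi) * mlog C := by
    have h := cfc_mul_star_comm Real.log (P * Qi)
    rw [hstar] at h
    have hE' : (P * Qi) * (Qi * P) = E := by
      rw [hEdef]; simp only [mul_assoc]
    have hC' : (Qi * P) * (P * Qi) = C := by
      rw [hCdef, ← hPP]; simp only [mul_assoc]
    rw [hE', hC'] at h
    exact h
  -- M and E are mutually inverse
  have hME : M * E = 1 := by
    rw [hMdef, hEdef]
    simp only [mul_assoc]
    rw [← mul_assoc Pi P, hPiP, one_mul, ← mul_assoc Qi Qi, ← mul_assoc B, hBQiQi,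
      one_mul, hPiP]
  have hEM : E * M = 1 := by
    rw [hMdef, hEdef]
    simp only [mul_assoc]
    rw [← mul_assoc P Pi, hPPi, one_mul, ← mul_assoc Qi Qi, ← mul_assoc (Qi * Qi) B,
      hQiQiB, one_mul, hPPi]
  have hMsa : _root_.IsSelfAdjoint M := by
    rw [hMdef]
    simp only [_root_.IsSelfAdjoint, StarMul.star_mul, hPi.star_eq,
      show star B = B from hB.1, mul_assoc]
  have hEsa : _root_.IsSelfAdjoint E := by
    rw [hEdef]
    simp only [_root_.IsSelfAdjoint, StarMul.star_mul, hP.star_eq, hQi.star_eq, mul_assoc]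
  have hEunit : IsUnit E := ⟨⟨E, M, hEM, hME⟩, rfl⟩
  have h0 : ∀ x ∈ spectrum ℝ E, x ≠ 0 := by
    intro x hx hx0
    exact (spectrum.zero_notMem_iff ℝ).mpr hEunit (hx0 ▸ hx)
  have hlog : mlog M = -(mlog E) := mlog_inv hEsa hEM hME h0
  rw [hlog, mul_neg, neg_mul, neg_inj]
  -- both sides equal A * (Qi * (mlog C * Q))
  have hPQ : (P * Qi) * Q = P := by rw [mul_assoc, hQiQ, mul_one]
  have key' : mlog E * P = P * Qi * mlog C * Q := by
    conv_lhs => rw [← hPQ]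
    rw [← mul_assoc, key]
  rw [mul_assoc P, key']
  simp only [mul_assoc]
  rw [← mul_assoc P P, hPP, hCdef]
  simp only [mul_assoc]
  rw [← mul_assoc Q Qi, hQQi, one_mul]
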